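/- In the game G_n, the strategy τ_0 defined by τ_0(d_i)=d_{i+1} for i ≤ n and τ_0(d_{n+1})=a_{n+1} is admissible for player 1: every cycle avoiding the sink in the subgraph where player 1 follows τ_0 has odd highest priority. -/

import Mathlib

structure PGame (V : Type) where
  E : V → V → Prop
  isP0 : V → Bool
  p : V → ℤ

namespace PGame

variable {V : Type}

/-- A valid positional strategy for player 0: at every player-0 node it follows an edge. -/
def Strat0Valid (G : PGame V) (σ : V → V) : Prop := ∀ v, G.isP0 v = true → G.E v (σ v)

/-- A valid positional strategy for player 1. -/
def Strat1Valid (G : PGame V) (τ : V → V) : Prop := ∀ v, G.isP0 v = false → G.E v (τ v)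

/-- Edges of the subgraph where player 0 follows `σ` (player 1 keeps all edges). -/
def E0 (G : PGame V) (σ : V → V) (v w : V) : Prop :=
  if G.isP0 v then w = σ v else G.E v w

/-- Edges of the subgraph where player 1 follows `τ` (player 0 keeps all edges). -/
def E1 (G : PGame V) (τ : V → V) (v w : V) : Prop :=
  if G.isP0 v then G.E v w else w = τ v

/-- A cycle of length `k` (given by a `k`-periodic sequence) in the relation `R`. -/
def IsCycle (R : V → V → Prop) (k : ℕ) (c : ℕ → V) : Prop :=
  0 < k ∧ (∀ i, R (c i) (c (i + 1))) ∧ ∀ i, c (i + k) = c i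

/-- The highest priority occurring on the (periodic) cycle `c` is even. -/
def TopEven (G : PGame V) (c : ℕ → V) : Prop :=
  ∃ i, Even (G.p (c i)) ∧ ∀ j, G.p (c j) ≤ G.p (c i)

/-- The highest priority occurring on the (periodic) cycle `c` is odd. -/
def TopOdd (G : PGame V) (c : ℕ → V) : Prop :=
  ∃ i, Odd (G.p (c i)) ∧ ∀ j, G.p (c j) ≤ G.p (c i)

/-- `σ` is an admissible player 0 strategy: valid, and every cycle avoiding the sink
in the subgraph where player 0 follows `σ` has even highest priority. -/
def Admissible0 (G : PGame V) (top : V) (σ : V → V) : Prop :=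
  G.Strat0Valid σ ∧ ∀ k c, IsCycle (G.E0 σ) k c → (∀ i, c i ≠ top) → G.TopEven c

/-- `τ` is an admissible player 1 strategy. -/
def Admissible1 (G : PGame V) (top : V) (τ : V → V) : Prop :=
  G.Strat1Valid τ ∧ ∀ k c, IsCycle (G.E1 τ) k c → (∀ i, c i ≠ top) → G.TopOdd c

/-- `top` is a sink node: unique smallest priority and only the self-loop as outgoing edge. -/
def IsSink (G : PGame V) (top : V) : Prop :=
  (∀ v, v ≠ top → G.p top < G.p v) ∧ (∀ w, G.E top w ↔ w = top)

/-- A sink parity game. -/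
def IsSinkGame (G : PGame V) (top : V) : Prop :=
  G.IsSink top ∧ (∃ σ, G.Admissible0 top σ) ∧ (∃ τ, G.Admissible1 top τ)

/-- One move when both players play their positional strategies. -/
def step (G : PGame V) (σ τ : V → V) (v : V) : V := if G.isP0 v then σ v else τ v

/-- The play from `v` under the strategies `σ`, `τ`. -/
def play (G : PGame V) (σ τ : V → V) (v : V) (n : ℕ) : V := (G.step σ τ)^[n] v

end PGame
/-- Nodes of the game `G_n`: `(true, i)` is `a_i`, `(false, i)` is `d_i` (for `1 ≤ i ≤ n+1`);
other indices are junk nodes that just move to the sink `a_{n+1}`. -/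
abbrev VN : Type := Bool × ℕ

/-- Priorities of `G_n`: `p(a_i) = 2i+1` for `i ≤ n`, `p(a_{n+1}) = 1`,
`p(d_i) = 2i+2` (so `p(d_{n+1}) = 2n+4`). -/
def pN (n : ℕ) : VN → ℤ
  | (true, i) => if 1 ≤ i ∧ i ≤ n then 2 * (i : ℤ) + 1 else 1
  | (false, i) => if 1 ≤ i ∧ i ≤ n + 1 then 2 * (i : ℤ) + 2 else 1

/-- Edges of `G_n`: `a_1 → a_2, d_2`; `a_i → a_1, a_{i+1}, d_{i+1}` for `2 ≤ i ≤ n`;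
`a_{n+1} → a_{n+1}` (sink); `d_1 → a_2, d_2`; `d_i → d_1, a_{i+1}, d_{i+1}` for `2 ≤ i ≤ n`;
`d_{n+1} → a_{n+1}`. -/
def EN (n : ℕ) : VN → VN → Prop
  | (true, i), w =>
      if i = n + 1 then w = (true, n + 1)
      else if i = 1 then w = (true, 2) ∨ w = (false, 2)
      else if 2 ≤ i ∧ i ≤ n then w = (true, 1) ∨ w = (true, i + 1) ∨ w = (false, i + 1)
      else w = (true, n + 1)
  | (false, i), w =>
      if i = n + 1 then w = (true, n + 1)
      else if i = 1 then w = (true, 2) ∨ w = (false, 2)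
      else if 2 ≤ i ∧ i ≤ n then w = (false, 1) ∨ w = (true, i + 1) ∨ w = (false, i + 1)
      else w = (true, n + 1)

/-- The game `G_n`: `a`-nodes belong to player 0, `d`-nodes to player 1. -/
def GameN (n : ℕ) : PGame VN := ⟨EN n, Prod.fst, pN n⟩

/-- The initial player 0 strategy: `σ₀(a_i) = a_{i+1}` for `i ≤ n`, `σ₀(a_{n+1}) = a_{n+1}`. -/
def sigma0 (n : ℕ) : VN → VN
  | (true, i) => if 1 ≤ i ∧ i ≤ n then (true, i + 1) else (true, n + 1)
  | (false, _) => (true, n + 1)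

/-- The initial player 1 strategy: `τ₀(d_i) = d_{i+1}` for `i ≤ n`, `τ₀(d_{n+1}) = a_{n+1}`. -/
def tau0 (n : ℕ) : VN → VN
  | (false, i) => if 1 ≤ i ∧ i ≤ n then (false, i + 1) else (true, n + 1)
  | (true, _) => (true, n + 1)

/-- In `G_n`, the initial strategy `τ₀` (with `τ₀(d_i) = d_{i+1}` and
`τ₀(d_{n+1}) = a_{n+1}`) is admissible for player 1: every cycle avoiding the sink
in the subgraph where player 1 follows `τ₀` has odd highest priority. -/
theorem stmt10 (n : ℕ) (hn : 1 ≤ n) :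
    (GameN n).Admissible1 (true, n + 1) (tau0 n) := by
  constructor
  · rintro ⟨b, i⟩ hb
    simp only [GameN] at hb
    subst hb
    show EN n (false, i) (tau0 n (false, i))
    by_cases h1 : i = n + 1
    · subst h1
      simp [tau0, EN, show ¬(1 ≤ n + 1 ∧ n + 1 ≤ n) by omega]
    · by_cases h2 : 1 ≤ i ∧ i ≤ n
      · by_cases h3 : i = 1
        · subst h3
          simp [tau0, EN, h1, h2, show n ≠ 0 by omega]
        · simp [tau0, EN, h1, h3, h2, show 2 ≤ i ∧ i ≤ n by omega]
      · have h3 : i ≠ 1 := by omega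
        simp [tau0, EN, h1, h2, h3, show ¬(2 ≤ i ∧ i ≤ n) by omega]
  · intro k c hcyc hne
    obtain ⟨hk, hstep, hper⟩ := hcyc
    -- no player-1 nodes on the cycle
    have hnod : ∀ t m j, n + 1 ≤ m + t → c j = (false, m) → False := by
      intro t
      induction t with
      | zero =>
        intro m j hm hc
        have hs := hstep j
        rw [hc] at hs
        simp only [PGame.E1, GameN, show ((false, m) : VN).1 = false from rfl] at hs
        simp only [Bool.false_eq_true, if_false, tau0] at hs
        rw [if_neg (by omega)] at hs
        exact hne (j + 1) hs
      | succ t ih =>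
        intro m j hm hc
        have hs := hstep j
        rw [hc] at hs
        simp only [PGame.E1, GameN, show ((false, m) : VN).1 = false from rfl] at hs
        simp only [Bool.false_eq_true, if_false, tau0] at hs
        by_cases h : 1 ≤ m ∧ m ≤ n
        · rw [if_pos h] at hs
          exact ih (m + 1) (j + 1) (by omega) hs
        · rw [if_neg h] at hs
          exact hne (j + 1) hs
    -- every node on the cycle is some a_m with 1 ≤ m ≤ n
    have hall : ∀ j, ∃ m, 1 ≤ m ∧ m ≤ n ∧ c j = (true, m) := by
      intro j
      rcases hcj : c j with ⟨b, m⟩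
      cases b with
      | false => exact absurd hcj (fun h => hnod (n + 1) m j (by omega) h)
      | true =>
        have hmn : m ≠ n + 1 := by
          intro h; exact hne j (by rw [hcj, h])
        by_cases h2 : 1 ≤ m ∧ m ≤ n
        · exact ⟨m, h2.1, h2.2, rfl⟩
        · exfalso
          have hs := hstep j
          rw [hcj] at hs
          simp only [PGame.E1, GameN, show ((true, m) : VN).1 = true from rfl,
            if_true, EN] at hs
          rw [if_neg hmn, if_neg (by omega), if_neg (by omega)] at hs
          exact hne (j + 1) hs
    -- periodicity
    have hmul : ∀ r q, c (r + k * q) = c r := by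
      intro r q
      induction q with
      | zero => simp
      | succ q ih =>
        have : r + k * (q + 1) = (r + k * q) + k := by ring
        rw [this, hper, ih]
    have hmod : ∀ j, c j = c (j % k) := by
      intro j
      conv_lhs => rw [show j = j % k + k * (j / k) from (Nat.mod_add_div j k).symm]
      exact hmul _ _
    -- take the max priority over one period
    obtain ⟨i, hi, hmax⟩ := Finset.exists_max_image (Finset.range k)
      (fun j => (GameN n).p (c j)) ⟨0, Finset.mem_range.mpr hk⟩
    obtain ⟨m, hm1, hm2, hcm⟩ := hall i
    refine ⟨i, ?_, ?_⟩
    · rw [hcm]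
      show Odd (pN n (true, m))
      rw [pN, if_pos ⟨hm1, hm2⟩]
      exact ⟨m, by ring⟩
    · intro j
      rw [hmod j]
      exact hmax _ (Finset.mem_range.mpr (Nat.mod_lt j hk))
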